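/- arXiv:1412.2333 — 3 statements merged into one kernel-verified Lean document; each statement's English description precedes it below -/
import Mathlib

section
/- Let G = (V, E) be a finite graph, Ê ⊆ E, and suppose Ê intersects every cut of G of size ≥ n (where n = |V|). Then the component graph of G induced by Ê has fewer than 2n edges. -/
/-- The set of edges of `G` crossing the cut `(S, V \ S)`. -/
def cutEdges {V : Type*} (G : SimpleGraph V) (S : Set V) : Set (Sym2 V) :=
  {e | e ∈ G.edgeSet ∧ ∃ u v, e = s(u, v) ∧ u ∈ S ∧ v ∉ S}

/-- The component graph of `G` induced by a subgraph `Ĝ`: vertices are connected components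
of `Ĝ`, with an edge between two distinct components whenever some edge of `G` joins them. -/
def compGraph {V : Type*} (G Ghat : SimpleGraph V) : SimpleGraph Ghat.ConnectedComponent where
  Adj C D := C ≠ D ∧ ∃ u v, G.Adj u v ∧
    Ghat.connectedComponentMk u = C ∧ Ghat.connectedComponentMk v = D
  symm := by
    constructor
    rintro C D ⟨hne, u, v, h, hu, hv⟩
    exact ⟨hne.symm, v, u, h.symm, hv, hu⟩
  loopless := by constructor; rintro C ⟨hne, -⟩; exact hne rfl

open scoped Classical

lemma cross_iff {W : Type*} (H : SimpleGraph W) (S : Set W) {u v : W}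
    (h : s(u, v) ∈ H.edgeSet) :
    s(u, v) ∈ cutEdges H S ↔ ((u ∈ S ∧ v ∉ S) ∨ (v ∈ S ∧ u ∉ S)) := by
  constructor
  · rintro ⟨-, a, b, hab, ha, hb⟩
    rw [Sym2.eq_iff] at hab
    rcases hab with ⟨rfl, rfl⟩ | ⟨rfl, rfl⟩
    · exact Or.inl ⟨ha, hb⟩
    · exact Or.inr ⟨ha, hb⟩
  · rintro (⟨hu, hv⟩ | ⟨hv, hu⟩)
    · exact ⟨h, u, v, rfl, hu, hv⟩
    · exact ⟨h, v, u, Sym2.eq_swap.symm, hv, hu⟩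

lemma count_cross {W : Type*} [Fintype W] [DecidableEq W] (H : SimpleGraph W) {u v : W}
    (huv : H.Adj u v) :
    2 * (Finset.univ.filter (fun S : Finset W => s(u, v) ∈ cutEdges H ↑S)).card
      = 2 ^ Fintype.card W := by
  have hne := huv.ne
  have hmem : s(u, v) ∈ H.edgeSet := huv
  have hcard : (Finset.univ.filter (fun S : Finset W => s(u, v) ∈ cutEdges H ↑S)).card
      = (Finset.univ.filter (fun S : Finset W => ¬ s(u, v) ∈ cutEdges H ↑S)).card := by
    apply Finset.card_nbij' (fun S => symmDiff S {u}) (fun S => symmDiff S {u})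
    · intro S hS
      simp only [Finset.mem_coe, Finset.mem_filter, Finset.mem_univ, true_and] at hS ⊢
      rw [cross_iff H _ hmem] at hS ⊢
      simp only [Finset.mem_coe, Finset.mem_symmDiff, Finset.mem_singleton] at *
      tauto
    · intro S hS
      simp only [Finset.mem_coe, Finset.mem_filter, Finset.mem_univ, true_and] at hS ⊢
      rw [cross_iff H _ hmem] at hS ⊢
      simp only [Finset.mem_coe, Finset.mem_symmDiff, Finset.mem_singleton] at *
      tauto
    · intro S _; simp [symmDiff_symmDiff_cancel_right]
    · intro S _; simp [symmDiff_symmDiff_cancel_right]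
  have := Finset.card_filter_add_card_filter_not
    (s := (Finset.univ : Finset (Finset W)))
    (p := fun S : Finset W => s(u, v) ∈ cutEdges H ↑S)
  rw [← hcard] at this
  rw [Finset.card_univ, Fintype.card_finset] at this
  omega

lemma cut_ncard_eq {W : Type*} [Fintype W] (H : SimpleGraph W) (S : Set W) :
    (cutEdges H S).ncard = (H.edgeFinset.filter (fun e => e ∈ cutEdges H S)).card := by
  rw [← Set.ncard_coe_finset]
  congr 1
  ext e
  simp only [Finset.coe_filter, SimpleGraph.mem_edgeFinset, Set.mem_setOf_eq]
  exact ⟨fun h => ⟨h.1, h⟩, fun h => h.2⟩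

lemma sum_cuts {W : Type*} [Fintype W] [DecidableEq W] (H : SimpleGraph W) :
    2 * ∑ S : Finset W, (cutEdges H (↑S : Set W)).ncard
      = H.edgeSet.ncard * 2 ^ Fintype.card W := by
  have h1 : ∑ S : Finset W, (cutEdges H (↑S : Set W)).ncard
      = ∑ S : Finset W, ∑ e ∈ H.edgeFinset, if e ∈ cutEdges H (↑S : Set W) then 1 else 0 := by
    refine Finset.sum_congr rfl fun S _ => ?_
    rw [cut_ncard_eq, Finset.card_filter]
  rw [h1, Finset.sum_comm, Finset.mul_sum]
  have h2 : ∀ e ∈ H.edgeFinset,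
      2 * ∑ S : Finset W, (if e ∈ cutEdges H (↑S : Set W) then 1 else 0)
        = 2 ^ Fintype.card W := by
    intro e he
    rw [← Finset.card_filter]
    induction e with
    | h u v =>
      exact count_cross H (SimpleGraph.mem_edgeFinset.mp he)
  rw [Finset.sum_congr rfl h2, Finset.sum_const, ← Set.ncard_coe_finset,
    SimpleGraph.coe_edgeFinset, smul_eq_mul]

lemma edges_le {W : Type*} [Fintype W] [DecidableEq W] (H : SimpleGraph W) {K : ℕ}
    (hK : ∀ S : Set W, (cutEdges H S).ncard ≤ K) :
    H.edgeSet.ncard ≤ 2 * K := by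
  have hsum := sum_cuts H
  have hle : ∑ S : Finset W, (cutEdges H (↑S : Set W)).ncard
      ≤ ∑ _S : Finset W, K := Finset.sum_le_sum fun S _ => hK _
  rw [Finset.sum_const, Finset.card_univ, Fintype.card_finset, smul_eq_mul] at hle
  have h2 : H.edgeSet.ncard * 2 ^ Fintype.card W ≤ (2 * K) * 2 ^ Fintype.card W := by
    rw [← hsum]; nlinarith [pow_pos (by norm_num : (0:ℕ) < 2) (Fintype.card W)]
  exact Nat.le_of_mul_le_mul_right h2 (pow_pos (by norm_num) _)

/-- If the sampled edge set `Ê ⊆ E` intersects every cut of `G` of size at least `n = |V|`,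
then the component graph induced by `Ê` has fewer than `2n` edges. -/
theorem compGraph_edges_lt {V : Type*} [Fintype V] (G Ghat : SimpleGraph V) (hle : Ghat ≤ G)
    (hhit : ∀ S : Set V, Fintype.card V ≤ (cutEdges G S).ncard →
      (cutEdges G S ∩ Ghat.edgeSet).Nonempty) :
    (compGraph G Ghat).edgeSet.ncard < 2 * Fintype.card V := by
  set n := Fintype.card V with hn
  -- n ≥ 1, else `hhit ∅` gives a contradiction
  have hn1 : 1 ≤ n := by
    by_contra h
    have := hhit ∅ (by omega)
    obtain ⟨e, ⟨-, u, v, -, hu, -⟩, -⟩ := this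
    exact hu
  set W := Ghat.ConnectedComponent
  have : Finite W := Quot.finite _
  have : Fintype W := Fintype.ofFinite W
  set H := compGraph G Ghat with hH
  -- every cut of H has size at most n - 1
  have hcut : ∀ T : Set W, (cutEdges H T).ncard ≤ n - 1 := by
    intro T
    set S : Set V := {v : V | Ghat.connectedComponentMk v ∈ T} with hS
    -- Ê avoids the lifted cut
    have hempty : cutEdges G S ∩ Ghat.edgeSet = ∅ := by
      ext e
      simp only [Set.mem_inter_iff, Set.mem_empty_iff_false, iff_false, not_and]
      rintro ⟨-, u, v, rfl, hu, hv⟩ hadj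
      rw [SimpleGraph.mem_edgeSet] at hadj
      exact hv (by
        have : Ghat.connectedComponentMk u = Ghat.connectedComponentMk v :=
          SimpleGraph.ConnectedComponent.sound hadj.reachable
        simpa [hS, ← this] using hu)
    -- so the lifted cut in G is small
    have hsmall : (cutEdges G S).ncard ≤ n - 1 := by
      by_contra h
      have := hhit S (by omega)
      rw [hempty] at this
      exact Set.not_nonempty_empty this
    -- the cut of H embeds into the lifted cut of G
    have hsub : cutEdges H T ⊆ (Sym2.map (Ghat.connectedComponentMk)) '' (cutEdges G S) := by
      rintro e ⟨he, C, D, rfl, hC, hD⟩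
      rw [SimpleGraph.mem_edgeSet] at he
      obtain ⟨-, u, v, huv, hu, hv⟩ := he
      refine ⟨s(u, v), ⟨huv, u, v, rfl, ?_, ?_⟩, ?_⟩
      · simpa [hS, hu] using hC
      · simpa [hS, hv] using hD
      · simp [hu, hv]
    calc (cutEdges H T).ncard
        ≤ ((Sym2.map (Ghat.connectedComponentMk)) '' (cutEdges G S)).ncard :=
          Set.ncard_le_ncard hsub (Set.toFinite _)
      _ ≤ (cutEdges G S).ncard := Set.ncard_image_le (Set.toFinite _)
      _ ≤ n - 1 := hsmall
  have := edges_le H hcut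
  omega
end

section
/- Let G = (V, E) be a finite graph and let T₁, T₂, T₃ be edge sets such that: T₁ is a spanning forest of G; T₂ is a spanning forest of the component graph G₁ = cg[G, T₁] (lifted back to edges of G realizing component-graph edges); and T₃ is a maximal spanning forest of the component graph G₂ = cg[G, T₁ ∪ T₂]. Then T₁ ∪ T₂ ∪ T₃ (lifted to G) is a maximal spanning forest of G, i.e., the number of its trees equals the number of connected components of G. -/
open SimpleGraph

section Aux

variable {V : Type*} (T : SimpleGraph V) (S : SimpleGraph V)
  (F : SimpleGraph T.ConnectedComponent)
  (hlift : ∀ u v, S.Adj u v →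
    F.Adj (T.connectedComponentMk u) (T.connectedComponentMk v))

open Classical in
/-- Project a walk in `T ⊔ S` to a walk in the component graph forest `F`. -/
noncomputable def projWalk :
    ∀ {u v : V}, (T ⊔ S).Walk u v →
      F.Walk (T.connectedComponentMk u) (T.connectedComponentMk v)
  | _, _, .nil => .nil
  | u, v, .cons (v := w) h p =>
    if h12 : T.Adj u w then
      (projWalk p).copy (ConnectedComponent.sound h12.reachable).symm rfl
    else
      .cons (hlift _ _ (((sup_adj _ _ _ _).mp h).resolve_left h12)) (projWalk p)

lemma projWalk_mem {u v : V} (p : (T ⊔ S).Walk u v) (e) :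
    e ∈ (projWalk T S F hlift p).edges → ∃ a b, S.Adj a b ∧ s(a, b) ∈ p.edges ∧
      e = s(T.connectedComponentMk a, T.connectedComponentMk b) := by
  induction p with
  | nil => simp [projWalk]
  | cons h p ih =>
    rename_i u w v
    rw [projWalk]
    split
    · intro he
      rw [SimpleGraph.Walk.edges_copy] at he
      obtain ⟨a, b, h1, h2, h3⟩ := ih he
      exact ⟨a, b, h1, by simp [h2], h3⟩
    · intro he
      rw [SimpleGraph.Walk.edges_cons, List.mem_cons] at he
      rcases he with he | he
      · exact ⟨u, w, ((sup_adj _ _ _ _).mp h).resolve_left (by assumption), by simp, he⟩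
      · obtain ⟨a, b, h1, h2, h3⟩ := ih he
        exact ⟨a, b, h1, by simp [h2], h3⟩

lemma projWalk_nodup
    (hone : ∀ u v u' v', S.Adj u v → S.Adj u' v' →
      T.connectedComponentMk u = T.connectedComponentMk u' →
      T.connectedComponentMk v = T.connectedComponentMk v' →
      u = u' ∧ v = v')
    {u v : V} (p : (T ⊔ S).Walk u v) (hnd : p.edges.Nodup) :
    (projWalk T S F hlift p).edges.Nodup := by
  induction p with
  | nil => simp [projWalk]
  | cons h p ih =>
    rename_i u w v
    rw [SimpleGraph.Walk.edges_cons, List.nodup_cons] at hnd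
    rw [projWalk]
    split
    · rw [SimpleGraph.Walk.edges_copy]
      exact ih hnd.2
    · rename_i h12
      rw [SimpleGraph.Walk.edges_cons, List.nodup_cons]
      refine ⟨fun hmem => ?_, ih hnd.2⟩
      obtain ⟨a, b, h1, h2, h3⟩ := projWalk_mem T S F hlift p _ hmem
      have huw : S.Adj u w := ((sup_adj _ _ _ _).mp h).resolve_left h12
      rw [Sym2.eq_iff] at h3
      rcases h3 with ⟨hx, hy⟩ | ⟨hx, hy⟩
      · obtain ⟨rfl, rfl⟩ := hone u w a b huw h1 hx hy
        exact hnd.1 h2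
      · obtain ⟨rfl, rfl⟩ := hone u w b a huw h1.symm hx hy
        exact hnd.1 (by rwa [Sym2.eq_swap] at h2)

lemma projWalk_pos
    (hdisj : ∀ a b, S.Adj a b → ¬ T.Adj a b)
    {u v : V} (p : (T ⊔ S).Walk u v) (e) (he : e ∈ p.edges) (heS : e ∈ S.edgeSet) :
    0 < (projWalk T S F hlift p).length := by
  induction p with
  | nil => simp at he
  | cons h p ih =>
    rename_i u w v
    rw [SimpleGraph.Walk.edges_cons, List.mem_cons] at he
    rw [projWalk]
    split
    · rename_i h12
      rw [SimpleGraph.Walk.length_copy]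
      rcases he with rfl | he
      · exact absurd h12 (hdisj u w heS)
      · exact ih he
    · simp

lemma closed_trail_false {W : Type*} {F : SimpleGraph W} (hFac : F.IsAcyclic)
    {C : W} (w : F.Walk C C) (ht : w.IsTrail) (hl : 0 < w.length) : False := by
  cases w with
  | nil => simp at hl
  | cons h p =>
    rw [SimpleGraph.Walk.isTrail_cons] at ht
    have hb := (isAcyclic_iff_forall_adj_isBridge.mp hFac) h
    rw [isBridge_iff] at hb
    exact hb (reachable_delete_edges_iff_exists_walk.mpr
      ⟨p.reverse, by simpa [Sym2.eq_swap] using ht.2⟩)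

end Aux

/-- If `T₁` is a spanning forest of `G`, `T₂` is (a lift of) a spanning forest of the component
graph `cg[G, T₁]`, and `T₃` is (a lift of) a maximal spanning forest of the component graph
`cg[G, T₁ ∪ T₂]`, then `T₁ ∪ T₂ ∪ T₃` is a maximal spanning forest of `G`: it is a forest and
its number of trees (connected components) equals the number of connected components of `G`. -/
theorem three_phase_maximal_spanning_forest {V : Type*} [Fintype V]
    (G T₁ T₂ T₃ : SimpleGraph V)
    (h1 : T₁ ≤ G) (h2 : T₂ ≤ G) (h3 : T₃ ≤ G)
    (hac1 : T₁.IsAcyclic) (hac12 : (T₁ ⊔ T₂).IsAcyclic)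
    (h2cross : ∀ u v, T₂.Adj u v →
      T₁.connectedComponentMk u ≠ T₁.connectedComponentMk v)
    (F : SimpleGraph (T₁ ⊔ T₂).ConnectedComponent)
    (hF : F ≤ compGraph G (T₁ ⊔ T₂))
    (hFac : F.IsAcyclic)
    (hFmax : ∀ C D, (compGraph G (T₁ ⊔ T₂)).Reachable C D → F.Reachable C D)
    (hlift : ∀ u v, T₃.Adj u v →
      F.Adj ((T₁ ⊔ T₂).connectedComponentMk u) ((T₁ ⊔ T₂).connectedComponentMk v))
    (hwit : ∀ C D, F.Adj C D → ∃ u v, T₃.Adj u v ∧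
      (T₁ ⊔ T₂).connectedComponentMk u = C ∧ (T₁ ⊔ T₂).connectedComponentMk v = D)
    (hone : ∀ u v u' v', T₃.Adj u v → T₃.Adj u' v' →
      (T₁ ⊔ T₂).connectedComponentMk u = (T₁ ⊔ T₂).connectedComponentMk u' →
      (T₁ ⊔ T₂).connectedComponentMk v = (T₁ ⊔ T₂).connectedComponentMk v' →
      u = u' ∧ v = v') :
    (T₁ ⊔ T₂ ⊔ T₃).IsAcyclic ∧
      Nat.card (T₁ ⊔ T₂ ⊔ T₃).ConnectedComponent = Nat.card G.ConnectedComponent := by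
  have hdisj : ∀ a b, T₃.Adj a b → ¬ (T₁ ⊔ T₂).Adj a b := by
    intro a b h3' h12
    exact (hF (hlift a b h3')).1 (SimpleGraph.ConnectedComponent.sound h12.reachable)
  constructor
  · intro v c hc
    by_cases hex : ∃ e ∈ c.edges, e ∈ T₃.edgeSet
    · obtain ⟨e, he, heS⟩ := hex
      exact closed_trail_false hFac (projWalk (T₁ ⊔ T₂) T₃ F hlift c)
        ⟨projWalk_nodup (T₁ ⊔ T₂) T₃ F hlift hone c hc.edges_nodup⟩
        (projWalk_pos (T₁ ⊔ T₂) T₃ F hlift hdisj c e he heS)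
    · push_neg at hex
      have hsub : ∀ e ∈ c.edges, e ∈ (T₁ ⊔ T₂).edgeSet := by
        intro e he
        have := c.edges_subset_edgeSet he
        rw [edgeSet_sup, Set.mem_union] at this
        exact this.resolve_right (hex e he)
      exact hac12 (c.transfer _ hsub) (hc.transfer hsub)
  · have hHle : T₁ ⊔ T₂ ⊔ T₃ ≤ G := sup_le (sup_le h1 h2) h3
    have liftReach : ∀ C D, F.Reachable C D → ∀ a b,
        (T₁ ⊔ T₂).connectedComponentMk a = C → (T₁ ⊔ T₂).connectedComponentMk b = D →
        (T₁ ⊔ T₂ ⊔ T₃).Reachable a b := by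
      intro C D h
      obtain ⟨w⟩ := h
      induction w with
      | nil =>
        intro a b ha hb
        exact (SimpleGraph.ConnectedComponent.exact (ha.trans hb.symm)).mono le_sup_left
      | cons hadj p ih =>
        intro a b ha hb
        obtain ⟨x, y, hxy, hx, hy⟩ := hwit _ _ hadj
        have r1 : (T₁ ⊔ T₂ ⊔ T₃).Reachable a x :=
          (SimpleGraph.ConnectedComponent.exact (ha.trans hx.symm)).mono le_sup_left
        have r2 : (T₁ ⊔ T₂ ⊔ T₃).Reachable x y :=
          ((sup_adj _ _ _ _).mpr (Or.inr hxy)).reachable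
        exact r1.trans (r2.trans (ih y b hy hb))
    have edgeReach : ∀ a b, G.Adj a b → (T₁ ⊔ T₂ ⊔ T₃).Reachable a b := by
      intro a b hab
      by_cases hq : (T₁ ⊔ T₂).connectedComponentMk a = (T₁ ⊔ T₂).connectedComponentMk b
      · exact (SimpleGraph.ConnectedComponent.exact hq).mono le_sup_left
      · have hadj : (compGraph G (T₁ ⊔ T₂)).Adj ((T₁ ⊔ T₂).connectedComponentMk a)
            ((T₁ ⊔ T₂).connectedComponentMk b) := ⟨hq, a, b, hab, rfl, rfl⟩
        exact liftReach _ _ (hFmax _ _ hadj.reachable) a b rfl rfl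
    have key : ∀ u v, (T₁ ⊔ T₂ ⊔ T₃).Reachable u v ↔ G.Reachable u v := by
      intro u v
      constructor
      · exact fun h => h.mono hHle
      · rintro ⟨w⟩
        induction w with
        | nil => exact SimpleGraph.Reachable.refl _
        | cons h p ih => exact (edgeReach _ _ h).trans ih
    have hrel : (T₁ ⊔ T₂ ⊔ T₃).Reachable = G.Reachable := by
      funext u v
      exact propext (key u v)
    have hty : (T₁ ⊔ T₂ ⊔ T₃).ConnectedComponent = G.ConnectedComponent := by
      unfold SimpleGraph.ConnectedComponent
      rw [hrel]
    exact congrArg Nat.card hty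
end

section
/- Let F be a forest in an edge-weighted graph G with distinct edge weights, and define an edge {u, v} of G to be F-heavy if F contains a path from u to v whose maximum edge weight is strictly less than wt(u, v), and F-light otherwise. Then no F-heavy edge belongs to the minimum spanning tree (minimum spanning forest) of G. -/
/-- Total weight of (the edge set of) a graph. -/
noncomputable def wsum {V : Type*} (wt : Sym2 V → ℝ) (X : SimpleGraph V) : ℝ :=
  ∑ᶠ e ∈ X.edgeSet, wt e

private lemma reach_of_walk {V : Type*} {A B : SimpleGraph V}
    (h : ∀ x y, A.Adj x y → B.Reachable x y) :
    ∀ {x y : V}, A.Walk x y → B.Reachable x y := by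
  intro x y w
  induction w with
  | nil => exact SimpleGraph.Reachable.refl _
  | cons ha _ ih => exact (h _ _ ha).trans ih

/-- In a graph `T`, after deleting the edge `s(u,v)`, every vertex connected (in `T`)
to `u` or `v` is still reachable from `u` or from `v`. -/
private lemma reach_or_reach {V : Type*} {T : SimpleGraph V} {u v : V} :
    ∀ {x w : V}, T.Walk x w →
      ((T.deleteEdges {s(u, v)}).Reachable u x ∨ (T.deleteEdges {s(u, v)}).Reachable v x) →
      ((T.deleteEdges {s(u, v)}).Reachable u w ∨ (T.deleteEdges {s(u, v)}).Reachable v w) := by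
  intro x w q
  induction q with
  | nil => exact id
  | @cons a b c ha q ih =>
    intro hx
    by_cases hab : s(a, b) = s(u, v)
    · rw [Sym2.eq_iff] at hab
      rcases hab with ⟨rfl, rfl⟩ | ⟨rfl, rfl⟩
      · exact ih (Or.inr (SimpleGraph.Reachable.refl _))
      · exact ih (Or.inl (SimpleGraph.Reachable.refl _))
    · have hadj : (T.deleteEdges {s(u, v)}).Adj a b := by
        rw [SimpleGraph.deleteEdges_adj]
        exact ⟨ha, by simpa using hab⟩
      rcases hx with hx | hx
      · exact ih (Or.inl (hx.trans hadj.reachable))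
      · exact ih (Or.inr (hx.trans hadj.reachable))

/-- Cycle-property consequence: if `F` is a forest in a weighted graph `G` with distinct edge
weights and the edge `{u, v}` is `F`-heavy — i.e. `F` contains a path from `u` to `v` all of
whose edges are strictly lighter than `{u, v}` — then `{u, v}` is not in the minimum spanning
tree `T` of `G`. -/
theorem heavy_edge_not_in_mst {V : Type*} [Fintype V] (G F T : SimpleGraph V)
    (wt : Sym2 V → ℝ)
    (hinj : ∀ e₁ ∈ G.edgeSet, ∀ e₂ ∈ G.edgeSet, wt e₁ = wt e₂ → e₁ = e₂)
    (hGc : G.Connected)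
    (hF : F ≤ G) (hFac : F.IsAcyclic)
    (hT : T ≤ G) (hTc : T.Connected) (hTac : T.IsAcyclic)
    (hTmin : ∀ T' : SimpleGraph V, T' ≤ G → T'.Connected → T'.IsAcyclic →
      wsum wt T ≤ wsum wt T')
    (u v : V) (hadj : G.Adj u v)
    (p : F.Walk u v) (hheavy : ∀ e ∈ p.edges, wt e < wt s(u, v)) :
    ¬ T.Adj u v := by
  classical
  intro hTuv
  set T₀ := T.deleteEdges {s(u, v)} with hT₀def
  set S : Set V := {x | T₀.Reachable u x} with hSdef
  have huS : u ∈ S := SimpleGraph.Reachable.refl u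
  -- `s(u,v)` is a bridge of the acyclic graph `T`, so `v ∉ S`.
  have hbridge : T.IsBridge s(u, v) :=
    SimpleGraph.isAcyclic_iff_forall_adj_isBridge.mp hTac hTuv
  have hvS : v ∉ S := SimpleGraph.isBridge_iff.mp hbridge
  -- find a boundary dart of the walk `p` across the cut `S`
  obtain ⟨d, hd, haS, hbS⟩ := SimpleGraph.Walk.exists_boundary_dart p S huS hvS
  set a := d.fst with hadef
  set b := d.snd with hbdef
  have hFab : F.Adj a b := d.adj
  have hab_mem : s(a, b) ∈ p.edges := by
    have : d.edge ∈ p.edges := by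
      unfold SimpleGraph.Walk.edges
      exact List.mem_map_of_mem hd
    exact this
  have hwlt : wt s(a, b) < wt s(u, v) := hheavy _ hab_mem
  have hne : s(a, b) ≠ s(u, v) := by
    intro h; rw [h] at hwlt; exact lt_irrefl _ hwlt
  -- `s(a,b)` is not an edge of `T`
  have habT : s(a, b) ∉ T.edgeSet := by
    intro h
    have hadj₀ : T₀.Adj a b := by
      rw [hT₀def, SimpleGraph.deleteEdges_adj]
      exact ⟨T.mem_edgeSet.mp h, by simpa using hne⟩
    exact hbS ((haS : T₀.Reachable u a).trans hadj₀.reachable)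
  -- the swapped tree T'
  set X : Set (Sym2 V) := insert s(a, b) (T.edgeSet \ {s(u, v)}) with hXdef
  set T' := SimpleGraph.fromEdgeSet X with hT'def
  have hXdiag : ∀ e ∈ X, ¬ e.IsDiag := by
    rintro e (rfl | ⟨heT, -⟩)
    · simpa using hFab.ne
    · exact T.not_isDiag_of_mem_edgeSet heT
  have hT'edge : T'.edgeSet = X := by
    rw [hT'def, SimpleGraph.edgeSet_fromEdgeSet]
    ext e
    simp only [Set.mem_diff, Set.mem_setOf_eq, and_iff_left_iff_imp]
    exact fun he => hXdiag e he
  have hT'adj : ∀ {x y : V}, T'.Adj x y ↔ s(x, y) ∈ X ∧ x ≠ y := by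
    intro x y; rw [hT'def, SimpleGraph.fromEdgeSet_adj]
  have hT'ab : T'.Adj a b := hT'adj.mpr ⟨Set.mem_insert _ _, hFab.ne⟩
  have hT₀leT' : T₀ ≤ T' := by
    intro x y hxy
    rw [hT₀def, SimpleGraph.deleteEdges_adj] at hxy
    exact hT'adj.mpr ⟨Set.mem_insert_of_mem _ ⟨T.mem_edgeSet.mpr hxy.1, by simpa using hxy.2⟩,
      hxy.1.ne⟩
  -- b is reachable from v in T₀
  have hvb : T₀.Reachable v b := by
    have := reach_or_reach (u := u) (v := v) ((hTc.preconnected u b).some)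
      (Or.inl (SimpleGraph.Reachable.refl u))
    rcases this with h | h
    · exact absurd h hbS
    · exact h
  -- u and v are reachable in T'
  have huv' : T'.Reachable u v :=
    (((haS : T₀.Reachable u a).mono hT₀leT').trans hT'ab.reachable).trans
      ((hvb.mono hT₀leT').symm)
  -- T' ≤ G
  have hT'G : T' ≤ G := by
    rw [hT'def]
    have hsub : X ⊆ G.edgeSet := by
      rintro e (rfl | ⟨heT, -⟩)
      · exact G.mem_edgeSet.mpr (hF hFab)
      · exact (SimpleGraph.edgeSet_subset_edgeSet.mpr hT) heT
    calc SimpleGraph.fromEdgeSet X ≤ SimpleGraph.fromEdgeSet G.edgeSet :=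
          SimpleGraph.fromEdgeSet_mono hsub
      _ = G := SimpleGraph.fromEdgeSet_edgeSet G
  -- T' connected
  have hnV : Nonempty V := hGc.nonempty
  have hT'c : T'.Connected := by
    refine SimpleGraph.Connected.mk ?_
    intro x y
    refine reach_of_walk ?_ ((hTc.preconnected x y).some)
    intro x y hxy
    by_cases h : s(x, y) = s(u, v)
    · rw [Sym2.eq_iff] at h
      rcases h with ⟨rfl, rfl⟩ | ⟨rfl, rfl⟩
      · exact huv'
      · exact huv'.symm
    · exact (hT'adj.mpr ⟨Set.mem_insert_of_mem _ ⟨T.mem_edgeSet.mpr hxy, by simpa using h⟩,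
        hxy.ne⟩).reachable
  -- T' acyclic
  have hT'ac : T'.IsAcyclic := by
    -- s(a,b) is a bridge of T'
    have hbr : T'.IsBridge s(a, b) := by
      rw [SimpleGraph.isBridge_iff]
      refine fun hr => ?_
      have hle : T' \ SimpleGraph.fromEdgeSet {s(a, b)} ≤ T₀ := by
        intro x y hxy
        have h1 : T'.Adj x y := hxy.1
        have h2 : ¬ (SimpleGraph.fromEdgeSet {s(a, b)} : SimpleGraph V).Adj x y := hxy.2
        rw [SimpleGraph.fromEdgeSet_adj] at h2
        push_neg at h2
        have hne' : s(x, y) ≠ s(a, b) := fun h => h1.ne (h2 (by simp [h]))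
        rcases (hT'adj.mp h1).1 with h | ⟨hTe, hne''⟩
        · exact absurd h hne'
        · rw [hT₀def, SimpleGraph.deleteEdges_adj]
          exact ⟨T.mem_edgeSet.mp hTe, by simpa using hne''⟩
      have : T₀.Reachable a b := hr.mono hle
      exact hbS ((haS : T₀.Reachable u a).trans this)
    intro x c hc
    have hnotmem : s(a, b) ∉ c.edges :=
      (SimpleGraph.isBridge_iff_forall_cycle_notMem (T'.mem_edgeSet.mpr hT'ab)).mp hbr c hc
    have hsub : ∀ e ∈ c.edges, e ∈ T.edgeSet := by
      intro e he
      have heT' : e ∈ T'.edgeSet := c.edges_subset_edgeSet he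
      rw [hT'edge] at heT'
      rcases heT' with rfl | ⟨heT, -⟩
      · exact absurd he hnotmem
      · exact heT
    exact hTac (c.transfer T hsub) (hc.transfer hsub)
  -- weight comparison
  have hfin : (T.edgeSet \ {s(u, v)}).Finite := Set.toFinite _
  have habmem' : s(a, b) ∉ T.edgeSet \ {s(u, v)} := fun h => habT h.1
  have huvmem : s(u, v) ∉ T.edgeSet \ {s(u, v)} := fun h => h.2 rfl
  have hTsplit : T.edgeSet = insert s(u, v) (T.edgeSet \ {s(u, v)}) := by
    rw [Set.insert_diff_singleton, Set.insert_eq_self.mpr (T.mem_edgeSet.mpr hTuv)]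
  have hwT : wsum wt T = wt s(u, v) + ∑ᶠ e ∈ T.edgeSet \ {s(u, v)}, wt e := by
    rw [wsum]
    conv_lhs => rw [hTsplit]
    rw [finsum_mem_insert _ huvmem hfin]
  have hwT' : wsum wt T' = wt s(a, b) + ∑ᶠ e ∈ T.edgeSet \ {s(u, v)}, wt e := by
    rw [wsum, hT'edge, hXdef, finsum_mem_insert _ habmem' hfin]
  have hmin := hTmin T' hT'G hT'c hT'ac
  rw [hwT, hwT'] at hmin
  linarith
end
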